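/- arXiv:1905.07365 — 2 statements merged into one kernel-verified Lean document; each statement's English description precedes it below -/
import Mathlib

section
/- For every pair (A,B) of disjoint, nonempty zones over the clock set C, there exists an interpolant for (A,B) that is the set of valuations satisfying a finite set of at most ⌊(|C|+1)/2⌋ atomic constraints. -/
/-- A bound `(k, ≺)`: an integer `k` together with a strictness flag
(`true` codes `≤`, `false` codes `<`), ordered lexicographically,
so that `(k, <) < (k, ≤) < (k+1, <)`. -/
abbrev Bnd : Type := Lex (ℤ × Bool)

/-- Addition of bounds: `(k,≺) + (k',≺')` is `(k+k', ≺'')` where `≺''` is `≤`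
iff both `≺` and `≺'` are `≤`. -/
instance : Add Bnd :=
  ⟨fun a b => toLex ((ofLex a).1 + (ofLex b).1, (ofLex a).2 && (ofLex b).2)⟩

/-- The zero bound is `(0, ≤)`. -/
instance : Zero Bnd := ⟨toLex (0, true)⟩

instance : AddCommMonoid Bnd where
  toAdd := instAddBnd
  toZero := instZeroBnd
  nsmul := nsmulRec
  add_assoc a b c := by
    change toLex (((ofLex a).1 + (ofLex b).1) + (ofLex c).1,
        (((ofLex a).2 && (ofLex b).2) && (ofLex c).2)) =
      toLex ((ofLex a).1 + ((ofLex b).1 + (ofLex c).1),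
        ((ofLex a).2 && ((ofLex b).2 && (ofLex c).2)))
    rw [add_assoc, Bool.and_assoc]
  zero_add a := by
    change toLex ((0 : ℤ) + (ofLex a).1, (true && (ofLex a).2)) = a
    simp
  add_zero a := by
    change toLex ((ofLex a).1 + (0 : ℤ), ((ofLex a).2 && true)) = a
    simp
  add_comm a b := by
    change toLex ((ofLex a).1 + (ofLex b).1, ((ofLex a).2 && (ofLex b).2)) =
      toLex ((ofLex b).1 + (ofLex a).1, ((ofLex b).2 && (ofLex a).2))
    rw [add_comm, Bool.and_comm]

/-- `satB d b` says that `d ≺ k`, where `b = (k, ≺)`. -/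
def satB (d : ℝ) (b : Bnd) : Prop :=
  if (ofLex b).2 then d ≤ ((ofLex b).1 : ℝ) else d < ((ofLex b).1 : ℝ)

variable {C : Type*}

/-- Extended valuation on `C0 = C ∪ {0}`: the special clock `0` is `none`. -/
def val0 (v : C → ℝ) : Option C → ℝ := fun x => x.elim 0 v

/-- The zone defined by a finite set of atomic constraints `x - y ≺ k`. -/
def zoneOf (G : Finset (Option C × Option C × Bnd)) : Set (C → ℝ) :=
  {v | (∀ c, 0 ≤ v c) ∧ ∀ g ∈ G, satB (val0 v g.1 - val0 v g.2.1) g.2.2}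

/-- A zone: a set of (nonnegative) clock valuations defined by a finite set of
atomic constraints. -/
def IsZone (Z : Set (C → ℝ)) : Prop :=
  ∃ G : Finset (Option C × Option C × Bnd), Z = zoneOf G


section BndLemmas

lemma Bnd.lt_iff (a b : Bnd) : a < b ↔ (ofLex a).1 < (ofLex b).1 ∨
    ((ofLex a).1 = (ofLex b).1 ∧ (ofLex a).2 = false ∧ (ofLex b).2 = true) := by
  rw [show a = toLex (ofLex a) from rfl, show b = toLex (ofLex b) from rfl, Prod.Lex.lt_iff]
  simp only [ofLex_toLex]
  constructor
  · rintro (h | ⟨h1, h2⟩)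
    · exact Or.inl h
    · refine Or.inr ⟨h1, ?_⟩
      cases hx : (ofLex a).2 <;> cases hy : (ofLex b).2 <;> rw [hx, hy] at h2 <;>
        simp_all [Bool.lt_iff]
  · rintro (h | ⟨h1, h2, h3⟩)
    · exact Or.inl h
    · exact Or.inr ⟨h1, by rw [h2, h3]; exact Bool.false_lt_true⟩

lemma Bnd.le_iff (a b : Bnd) : a ≤ b ↔ (ofLex a).1 < (ofLex b).1 ∨
    ((ofLex a).1 = (ofLex b).1 ∧ ((ofLex a).2 = false ∨ (ofLex b).2 = true)) := by
  rw [show a = toLex (ofLex a) from rfl, show b = toLex (ofLex b) from rfl, Prod.Lex.le_iff]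
  simp only [ofLex_toLex]
  constructor
  · rintro (h | ⟨h1, h2⟩)
    · exact Or.inl h
    · refine Or.inr ⟨h1, ?_⟩
      cases hx : (ofLex a).2 <;> cases hy : (ofLex b).2 <;> rw [hx, hy] at h2 <;>
        revert h2 <;> decide
  · rintro (h | ⟨h1, h2⟩)
    · exact Or.inl h
    · refine Or.inr ⟨h1, ?_⟩
      rcases h2 with h2 | h2 <;> rw [h2]
      · exact Bool.false_le _
      · exact Bool.le_true _

lemma Bnd.ext {a b : Bnd} (h1 : (ofLex a).1 = (ofLex b).1)
    (h2 : (ofLex a).2 = (ofLex b).2) : a = b := by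
  have h : ofLex a = ofLex b := Prod.ext h1 h2
  exact congrArg toLex h

@[simp] lemma Bnd.fst_add (a b : Bnd) : (ofLex (a + b)).1 = (ofLex a).1 + (ofLex b).1 := rfl
@[simp] lemma Bnd.snd_add (a b : Bnd) : (ofLex (a + b)).2 = ((ofLex a).2 && (ofLex b).2) := rfl
@[simp] lemma Bnd.fst_zero : (ofLex (0 : Bnd)).1 = 0 := rfl
@[simp] lemma Bnd.snd_zero : (ofLex (0 : Bnd)).2 = true := rfl

lemma Bnd.ofLex_add (a b : Bnd) :
    ofLex (a + b) = ((ofLex a).1 + (ofLex b).1, ((ofLex a).2 && (ofLex b).2)) := rfl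

lemma Bnd.ofLex_zero : (ofLex (0 : Bnd)) = ((0 : ℤ), true) := rfl

lemma Bnd.lt_zero_iff (b : Bnd) :
    b < 0 ↔ (ofLex b).1 < 0 ∨ ((ofLex b).1 = 0 ∧ (ofLex b).2 = false) := by
  rw [Bnd.lt_iff, Bnd.ofLex_zero]
  simp

lemma Bnd.not_satB_zero {b : Bnd} (h : b < 0) : ¬ satB 0 b := by
  rw [Bnd.lt_zero_iff] at h
  unfold satB
  rcases h with h | ⟨h1, h2⟩
  · split <;> intro hc
    · have : (0:ℤ) ≤ (ofLex b).1 := by exact_mod_cast hc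
      omega
    · have : (0:ℤ) < (ofLex b).1 := by exact_mod_cast hc
      omega
  · rw [h2, h1]; simp

lemma Bnd.add_nonneg {a b : Bnd} (ha : 0 ≤ a) (hb : 0 ≤ b) : 0 ≤ a + b := by
  rw [Bnd.le_iff, Bnd.ofLex_zero] at ha hb ⊢
  rw [Bnd.ofLex_add]
  simp only at ha hb ⊢
  rcases ha with h | ⟨h1, h2⟩ <;> rcases hb with h' | ⟨h1', h2'⟩ <;> simp_all <;> omega

lemma Bnd.satB_add {d e : ℝ} {a b : Bnd} (ha : satB d a) (hb : satB e b) :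
    satB (d + e) (a + b) := by
  unfold satB at *
  rw [Bnd.ofLex_add]
  rcases hfa : (ofLex a).2 <;> rcases hfb : (ofLex b).2 <;>
    rw [hfa] at ha <;> rw [hfb] at hb <;> simp only [Bool.and_self, Bool.false_and,
      Bool.and_false, Bool.and_true, Bool.true_and, if_true, if_false] <;>
    simp only [if_false, if_true, Bool.false_eq_true, Int.cast_add] <;>
    first
      | exact add_lt_add ha hb
      | exact add_lt_add_of_lt_of_le ha hb
      | exact add_lt_add_of_le_of_lt ha hb
      | exact add_le_add ha hb

lemma Bnd.satB_zero : satB 0 (0 : Bnd) := by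
  unfold satB; rw [Bnd.ofLex_zero]; simp

/-- The real relaxation of a bound: `k` if weak, `k - ε` if strict. -/
def rB (ε : ℝ) (b : Bnd) : ℝ := ((ofLex b).1 : ℝ) - if (ofLex b).2 then 0 else ε

lemma Bnd.satB_of_le_rB {d ε : ℝ} {b : Bnd} (hε : 0 < ε) (h : d ≤ rB ε b) : satB d b := by
  unfold satB; unfold rB at h
  by_cases hf : (ofLex b).2 = true
  · rw [if_pos hf] at h ⊢; linarith
  · rw [if_neg hf] at h ⊢; linarith

lemma Bnd.fst_sum (l : List Bnd) :
    (ofLex l.sum).1 = (l.map (fun b => (ofLex b).1)).sum := by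
  induction l with
  | nil => rfl
  | cons a l ih =>
    have h0 : (ofLex ((a : Bnd) + l.sum)).1 = (ofLex a).1 + (ofLex l.sum).1 := rfl
    rw [List.sum_cons, h0, ih, List.map_cons, List.sum_cons]

lemma Bnd.snd_sum_true {l : List Bnd} (h : (ofLex l.sum).2 = true) :
    ∀ b ∈ l, (ofLex b).2 = true := by
  induction l with
  | nil => simp
  | cons a l ih =>
    have h0 : (ofLex ((a : Bnd) + l.sum)).2 = ((ofLex a).2 && (ofLex l.sum).2) := rfl
    rw [List.sum_cons, h0] at h
    simp only [Bool.and_eq_true] at h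
    intro b hb
    rcases List.mem_cons.1 hb with rfl | hb
    · exact h.1
    · exact ih h.2 b hb

lemma Bnd.rB_sum_ge {ε : ℝ} (hε : 0 ≤ ε) (l : List Bnd) :
    ((ofLex l.sum).1 : ℝ) - ε * l.length ≤ (l.map (rB ε)).sum := by
  induction l with
  | nil =>
    rw [show (ofLex ([] : List Bnd).sum).1 = 0 from rfl]
    simp
  | cons a l ih =>
    have h0 : (ofLex ((a : Bnd) + l.sum)).1 = (ofLex a).1 + (ofLex l.sum).1 := rfl
    rw [List.sum_cons, h0, List.map_cons, List.sum_cons]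
    have h1 : ((ofLex a).1 : ℝ) - ε ≤ rB ε a := by
      unfold rB; split <;> simp [hε]
    simp only [List.length_cons]
    push_cast
    nlinarith [h1, ih]

lemma Bnd.rB_sum_of_all_weak {ε : ℝ} (l : List Bnd)
    (h : ∀ b ∈ l, (ofLex b).2 = true) :
    (l.map (rB ε)).sum = ((ofLex l.sum).1 : ℝ) := by
  induction l with
  | nil =>
    rw [show (ofLex ([] : List Bnd).sum).1 = 0 from rfl]
    simp
  | cons a l ih =>
    have h0 : (ofLex ((a : Bnd) + l.sum)).1 = (ofLex a).1 + (ofLex l.sum).1 := rfl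
    rw [List.sum_cons, h0, List.map_cons, List.sum_cons,
      ih (fun b hb => h b (List.mem_cons_of_mem _ hb))]
    have ha : rB ε a = ((ofLex a).1 : ℝ) := by
      unfold rB; rw [h a (List.mem_cons_self)]; simp
    rw [ha]; push_cast; ring

/-- A list of bounds with nonnegative sum has nonnegative real relaxation,
provided `ε` is small compared to the length. -/
lemma Bnd.rB_sum_nonneg {ε : ℝ} {l : List Bnd} (hε : 0 ≤ ε)
    (hlen : ε * l.length < 1) (h : ¬ l.sum < 0) : 0 ≤ (l.map (rB ε)).sum := by
  rcases lt_trichotomy ((ofLex l.sum).1) 0 with hneg | hzero | hpos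
  · exact absurd ((Bnd.lt_zero_iff _).2 (Or.inl hneg)) h
  · have hflag : (ofLex l.sum).2 = true := by
      by_contra hf
      exact h ((Bnd.lt_zero_iff _).2 (Or.inr ⟨hzero, Bool.eq_false_iff.2 hf⟩))
    rw [Bnd.rB_sum_of_all_weak l (Bnd.snd_sum_true hflag), hzero]
    simp
  · have h1 : (1 : ℝ) ≤ ((ofLex l.sum).1 : ℝ) := by exact_mod_cast hpos
    linarith [Bnd.rB_sum_ge hε l]

end BndLemmas
section Walks

variable {V : Type*}

/-- `Wk E x y l`: `l` is a walk from `x` to `y` whose head is the *last* edge. -/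
def Wk (E : Finset (V × V × Bnd)) : V → V → List (V × V × Bnd) → Prop
  | x, y, [] => x = y
  | x, y, e :: l => e ∈ E ∧ e.2.1 = y ∧ Wk E x e.1 l

/-- Bound weight of a walk. -/
def bwt (l : List (V × V × Bnd)) : Bnd := (l.map (fun e => e.2.2)).sum

/-- Relaxed real weight of a walk. -/
def rwt (ε : ℝ) (l : List (V × V × Bnd)) : ℝ := (l.map (fun e => rB ε e.2.2)).sum

@[simp] lemma bwt_nil : bwt ([] : List (V × V × Bnd)) = 0 := rfl
@[simp] lemma rwt_nil (ε : ℝ) : rwt ε ([] : List (V × V × Bnd)) = 0 := rfl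
lemma bwt_cons (e : V × V × Bnd) (l) : bwt (e :: l) = e.2.2 + bwt l := by
  simp [bwt]
lemma rwt_cons (ε : ℝ) (e : V × V × Bnd) (l) : rwt ε (e :: l) = rB ε e.2.2 + rwt ε l := by
  simp [rwt]
lemma bwt_append (l m : List (V × V × Bnd)) : bwt (l ++ m) = bwt l + bwt m := by
  induction l with
  | nil =>
    rw [List.nil_append]
    refine (Bnd.ext ?_ ?_).symm
    · simp only [Bnd.fst_add, bwt_nil, Bnd.fst_zero]; ring
    · simp only [Bnd.snd_add, bwt_nil, Bnd.snd_zero, Bool.true_and]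
  | cons e l ih =>
    rw [List.cons_append, bwt_cons, bwt_cons, ih]
    refine Bnd.ext ?_ ?_
    · simp only [Bnd.fst_add]; ring
    · simp only [Bnd.snd_add, Bool.and_assoc]
lemma rwt_append (ε : ℝ) (l m : List (V × V × Bnd)) :
    rwt ε (l ++ m) = rwt ε l + rwt ε m := by
  induction l with
  | nil => simp
  | cons e l ih => rw [List.cons_append, rwt_cons, rwt_cons, ih, add_assoc]

lemma wk_append {E : Finset (V × V × Bnd)} {x z : V} {m l : List (V × V × Bnd)} :
    Wk E x z (m ++ l) ↔ ∃ y, Wk E y z m ∧ Wk E x y l := by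
  induction m generalizing z with
  | nil =>
    simp only [List.nil_append]
    constructor
    · intro h; exact ⟨z, rfl, h⟩
    · rintro ⟨y, rfl, h⟩; exact h
  | cons e m ih =>
    simp only [List.cons_append]
    constructor
    · rintro ⟨he, h21, h⟩
      obtain ⟨y, hy1, hy2⟩ := ih.1 h
      exact ⟨y, ⟨he, h21, hy1⟩, hy2⟩
    · rintro ⟨y, ⟨he, h21, hy1⟩, hy2⟩
      exact ⟨he, h21, ih.2 ⟨y, hy1, hy2⟩⟩

lemma wk_mem {E : Finset (V × V × Bnd)} {x y : V} {l : List (V × V × Bnd)}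
    (h : Wk E x y l) : ∀ e ∈ l, e ∈ E := by
  induction l generalizing y with
  | nil => simp
  | cons f l ih =>
    obtain ⟨hf, _, h'⟩ := h
    intro e he
    rcases List.mem_cons.1 he with rfl | he
    · exact hf
    · exact ih h' e he

lemma exists_dup_split {α β : Type*} (f : α → β) :
    ∀ (l : List α), ¬ (l.map f).Nodup →
      ∃ l1 e l2 e' l3, l = l1 ++ ((e :: l2) ++ (e' :: l3)) ∧ f e = f e' := by
  intro l
  induction l with
  | nil => simp
  | cons a t ih =>
    intro h
    rw [List.map_cons, List.nodup_cons] at h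
    by_cases hm : f a ∈ t.map f
    · obtain ⟨e', he', hfe⟩ := List.mem_map.1 hm
      obtain ⟨l2, l3, rfl⟩ := List.append_of_mem he'
      exact ⟨[], a, l2, e', l3, by simp, hfe.symm⟩
    · have h' : ¬ (t.map f).Nodup := fun hn => h ⟨hm, hn⟩
      obtain ⟨l1, e, l2, e', l3, rfl, hfe⟩ := ih h'
      exact ⟨a :: l1, e, l2, e', l3, by simp, hfe⟩

/-- Splitting a walk with a repeated source vertex into a nonempty closed
subwalk and a shorter walk with the same endpoints. -/
lemma wk_split {E : Finset (V × V × Bnd)} {x y : V} {l : List (V × V × Bnd)}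
    (h : Wk E x y l) (hd : ¬ (l.map (fun e => e.1)).Nodup) :
    ∃ a l₂ l', Wk E a a l₂ ∧ l₂ ≠ [] ∧ Wk E x y l' ∧ l' ≠ [] ∧
      l₂.length + l'.length = l.length ∧
      bwt l₂ + bwt l' = bwt l ∧ ∀ ε : ℝ, rwt ε l₂ + rwt ε l' = rwt ε l := by
  obtain ⟨l1, e, l2, e', l3, rfl, hfe⟩ := exists_dup_split _ l hd
  obtain ⟨z1, h1, h2⟩ := (wk_append (m := l1) (l := (e :: l2) ++ (e' :: l3))).1 h
  obtain ⟨z2, hA, hB⟩ := (wk_append (m := e :: l2) (l := e' :: l3)).1 h2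
  obtain ⟨heE, he21, hA3⟩ := id hA
  obtain ⟨he'E, he'21, hB3⟩ := id hB
  have hA3' : Wk E z2 e.1 l2 := hA3
  have hB3' : Wk E x e'.1 l3 := hB3
  refine ⟨e.1, l2 ++ [e'], l1 ++ (e :: l3), ?_, by simp, ?_, by simp, ?_, ?_, ?_⟩
  · exact (wk_append (m := l2) (l := [e'])).2 ⟨z2, hA3', ⟨he'E, he'21, hfe⟩⟩
  · refine (wk_append (m := l1) (l := e :: l3)).2 ⟨z1, h1, ⟨heE, he21, ?_⟩⟩
    rw [hfe]; exact hB3'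
  · simp; omega
  · simp only [bwt_append, bwt_cons, bwt_nil]
    refine Bnd.ext ?_ ?_
    · simp only [Bnd.fst_add, Bnd.fst_zero]; ring
    · simp only [Bnd.snd_add, Bnd.snd_zero, Bool.and_true, Bool.true_and,
        Bool.and_assoc, Bool.and_comm, Bool.and_left_comm]
  · intro ε
    simp only [rwt_append, rwt_cons, rwt_nil]
    ring

end Walks

section BF

attribute [local instance] Classical.propDecidable

variable {V : Type*} (E : Finset (V × V × Bnd)) (s : V) (ε : ℝ)

/-- Bellman–Ford iteration from source `s`. -/
noncomputable def BF : ℕ → V → WithTop ℝ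
  | 0, x => if x = s then 0 else ⊤
  | (k+1), x => min (BF k x)
      ((E.filter (fun e => e.2.1 = x)).inf (fun e => BF k e.1 + ((rB ε e.2.2 : ℝ) : WithTop ℝ)))

lemma BF_antitone : ∀ {j k : ℕ}, j ≤ k → ∀ x, BF E s ε k x ≤ BF E s ε j x := by
  have step : ∀ k x, BF E s ε (k+1) x ≤ BF E s ε k x := by
    intro k x; rw [show BF E s ε (k+1) x = min _ _ from rfl]; exact min_le_left _ _
  intro j k hjk
  induction k with
  | zero => intro x; cases Nat.le_zero.1 hjk; exact le_refl _
  | succ k ih =>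
    intro x
    rcases Nat.lt_or_ge j (k+1) with h | h
    · exact le_trans (step k x) (ih (Nat.lt_succ_iff.1 h) x)
    · cases Nat.le_antisymm hjk h; exact le_refl _

lemma BF_le_of_wk : ∀ (l : List (V × V × Bnd)) (x : V), Wk E s x l →
    ∀ k, l.length ≤ k → BF E s ε k x ≤ ((rwt ε l : ℝ) : WithTop ℝ) := by
  intro l
  induction l with
  | nil =>
    rintro x rfl k _
    have h0 : BF E s ε 0 s = 0 := by simp [BF]
    simpa using le_trans (BF_antitone E s ε (Nat.zero_le k) s) (le_of_eq h0)
  | cons e l ih =>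
    rintro x ⟨heE, he21, hw⟩ k hk
    rcases k with _ | k'
    · simp at hk
    · have h1 : BF E s ε (k'+1) x ≤
          (E.filter (fun e => e.2.1 = x)).inf
            (fun e => BF E s ε k' e.1 + ((rB ε e.2.2 : ℝ) : WithTop ℝ)) := by
        rw [show BF E s ε (k'+1) x = min _ _ from rfl]; exact min_le_right _ _
      have h2 : (E.filter (fun e => e.2.1 = x)).inf
            (fun e => BF E s ε k' e.1 + ((rB ε e.2.2 : ℝ) : WithTop ℝ))
          ≤ BF E s ε k' e.1 + ((rB ε e.2.2 : ℝ) : WithTop ℝ) :=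
        Finset.inf_le (Finset.mem_filter.2 ⟨heE, he21⟩)
      have h3 : BF E s ε k' e.1 ≤ ((rwt ε l : ℝ) : WithTop ℝ) :=
        ih e.1 hw k' (by simpa using Nat.lt_succ_iff.1 (Nat.lt_of_lt_of_le (by simp) hk))
      calc BF E s ε (k'+1) x ≤ _ := le_trans h1 h2
        _ ≤ ((rwt ε l : ℝ) : WithTop ℝ) + ((rB ε e.2.2 : ℝ) : WithTop ℝ) :=
            add_le_add h3 le_rfl
        _ = ((rwt ε (e :: l) : ℝ) : WithTop ℝ) := by
            rw [rwt_cons, ← WithTop.coe_add, add_comm]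

lemma BF_attained : ∀ (k : ℕ) (x : V), BF E s ε k x ≠ ⊤ →
    ∃ l, Wk E s x l ∧ BF E s ε k x = ((rwt ε l : ℝ) : WithTop ℝ) := by
  intro k
  induction k with
  | zero =>
    intro x hx
    by_cases h : x = s
    · subst h; exact ⟨[], rfl, by simp [BF]⟩
    · exact absurd (by simp [BF, h]) hx
  | succ k ih =>
    intro x hx
    have hdef : BF E s ε (k+1) x = min (BF E s ε k x)
        ((E.filter (fun e => e.2.1 = x)).inf
          (fun e => BF E s ε k e.1 + ((rB ε e.2.2 : ℝ) : WithTop ℝ))) := rfl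
    rcases le_total (BF E s ε k x)
        ((E.filter (fun e => e.2.1 = x)).inf
          (fun e => BF E s ε k e.1 + ((rB ε e.2.2 : ℝ) : WithTop ℝ))) with hle | hle
    · rw [hdef, min_eq_left hle] at hx ⊢
      exact ih x hx
    · rw [hdef, min_eq_right hle] at hx ⊢
      rcases Finset.eq_empty_or_nonempty (E.filter (fun e => e.2.1 = x)) with hemp | hne
      · rw [hemp] at hx; simp at hx
      · obtain ⟨e, he, heq⟩ := Finset.exists_mem_eq_inf _ hne
          (fun e => BF E s ε k e.1 + ((rB ε e.2.2 : ℝ) : WithTop ℝ))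
        rw [heq] at hx ⊢
        obtain ⟨heE, he21⟩ := Finset.mem_filter.1 he
        have hbf : BF E s ε k e.1 ≠ ⊤ := by
          intro hc; rw [hc] at hx; simp at hx
        obtain ⟨l, hl, hval⟩ := ih e.1 hbf
        refine ⟨e :: l, ⟨heE, he21, hl⟩, ?_⟩
        rw [hval, rwt_cons, ← WithTop.coe_add, add_comm]

end BF
section Construction

variable {V : Type*} [Fintype V]

lemma rwt_eq_sum_map (ε : ℝ) (l : List (V × V × Bnd)) :
    rwt ε l = ((l.map (fun e => e.2.2)).map (rB ε)).sum := by
  rw [List.map_map]; rfl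

/-- Any closed walk in a graph with no negative cycle has nonnegative
relaxed weight, provided `ε` is small. -/
lemma rwt_closed_nonneg (E : Finset (V × V × Bnd))
    (hNN : ∀ x l, Wk E x x l → ¬ bwt l < 0) {ε : ℝ} (hε : 0 < ε)
    (hεN : ε * (Fintype.card V) < 1) :
    ∀ n l (x : V), l.length ≤ n → Wk E x x l → 0 ≤ rwt ε l := by
  intro n
  induction n with
  | zero =>
    intro l x hlen hw
    rw [List.length_eq_zero_iff.1 (Nat.le_zero.1 hlen)]
    simp
  | succ n ih =>
    intro l x hlen hw
    by_cases hN : l.length ≤ Fintype.card V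
    · have h1 : ε * l.length < 1 := by
        refine lt_of_le_of_lt ?_ hεN
        have : (l.length : ℝ) ≤ (Fintype.card V : ℝ) := by exact_mod_cast hN
        nlinarith
      have := Bnd.rB_sum_nonneg (le_of_lt hε)
        (by simpa using h1) (hNN x l hw)
      rwa [rwt_eq_sum_map]
    · have hdup : ¬ (l.map (fun e => e.1)).Nodup := by
        intro hnd
        exact hN (by simpa using hnd.length_le_card)
      obtain ⟨a, l₂, l', hw₂, hne₂, hw', hne', hlen', _, hr⟩ := wk_split hw hdup
      have hl₂ : l₂.length ≤ n := by
        have := List.length_pos_iff.2 hne'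
        omega
      have hl' : l'.length ≤ n := by
        have := List.length_pos_iff.2 hne₂
        omega
      have g₂ := ih l₂ a hl₂ hw₂
      have g' := ih l' x hl' hw'
      have := hr ε
      linarith

/-- Every walk from the source weighs at least the Bellman–Ford value. -/
lemma BF_lb (E : Finset (V × V × Bnd)) (s : V)
    (hNN : ∀ x l, Wk E x x l → ¬ bwt l < 0) {ε : ℝ} (hε : 0 < ε)
    (hεN : ε * (Fintype.card V) < 1) :
    ∀ n l (x : V), l.length ≤ n → Wk E s x l →
      BF E s ε (Fintype.card V) x ≤ ((rwt ε l : ℝ) : WithTop ℝ) := by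
  intro n
  induction n with
  | zero =>
    intro l x hlen hw
    exact BF_le_of_wk E s ε l x hw _ (le_trans hlen (Nat.zero_le _))
  | succ n ih =>
    intro l x hlen hw
    by_cases hN : l.length ≤ Fintype.card V
    · exact BF_le_of_wk E s ε l x hw _ hN
    · have hdup : ¬ (l.map (fun e => e.1)).Nodup := by
        intro hnd
        exact hN (by simpa using hnd.length_le_card)
      obtain ⟨a, l₂, l', hw₂, hne₂, hw', hne', hlen', _, hr⟩ := wk_split hw hdup
      have hl' : l'.length ≤ n := by
        have := List.length_pos_iff.2 hne₂
        omega
      have g' := ih l' x hl' hw'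
      have g₂ := rwt_closed_nonneg E hNN hε hεN l₂.length l₂ a (le_refl _) hw₂
      refine le_trans g' ?_
      rw [WithTop.coe_le_coe]
      have := hr ε
      linarith

lemma BF_triangle (E : Finset (V × V × Bnd)) (s : V)
    (hNN : ∀ x l, Wk E x x l → ¬ bwt l < 0) {ε : ℝ} (hε : 0 < ε)
    (hεN : ε * (Fintype.card V) < 1) :
    ∀ e ∈ E, BF E s ε (Fintype.card V) e.2.1 ≤
      BF E s ε (Fintype.card V) e.1 + ((rB ε e.2.2 : ℝ) : WithTop ℝ) := by
  intro e he
  by_cases h : BF E s ε (Fintype.card V) e.1 = ⊤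
  · rw [h, top_add]; exact le_top
  · obtain ⟨l, hl, hval⟩ := BF_attained E s ε _ e.1 h
    have hw : Wk E s e.2.1 (e :: l) := ⟨he, rfl, hl⟩
    have := BF_lb E s hNN hε hεN (e :: l).length (e :: l) e.2.1 (le_refl _) hw
    refine le_trans this ?_
    rw [hval, rwt_cons, ← WithTop.coe_add, WithTop.coe_le_coe]
    linarith

/-- If a graph covering all vertices from the source has no negative cycle,
then there is a potential function realizing all its constraints. -/
lemma exists_potential (E : Finset (V × V × Bnd)) (s : V)
    (hcov : ∀ x : V, x ≠ s → (s, x, (0 : Bnd)) ∈ E)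
    (hNN : ∀ x l, Wk E x x l → ¬ bwt l < 0) :
    ∃ d : V → ℝ, d s = 0 ∧ (∀ x, d x ≤ 0) ∧
      ∀ e ∈ E, satB (d e.2.1 - d e.1) e.2.2 := by
  have hVne : 0 < Fintype.card V := Fintype.card_pos_iff.2 ⟨s⟩
  set N := Fintype.card V with hN
  set ε : ℝ := 1 / (N + 1) with hε
  have hε0 : 0 < ε := by
    apply div_pos one_pos
    positivity
  have hεN : ε * N < 1 := by
    rw [hε, div_mul_eq_mul_div, mul_comm, div_lt_one (by positivity)]
    nlinarith [hVne]
  have hrB0 : rB ε (0 : Bnd) = 0 := by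
    unfold rB
    rw [Bnd.fst_zero, Bnd.snd_zero]
    simp
  have hle0 : ∀ x, BF E s ε N x ≤ 0 := by
    intro x
    by_cases hx : x = s
    · subst hx
      simpa using BF_le_of_wk E _ ε [] _ rfl N (Nat.zero_le _)
    · have hw : Wk E s x [(s, x, (0 : Bnd))] := ⟨hcov x hx, rfl, rfl⟩
      have := BF_le_of_wk E s ε [(s, x, (0 : Bnd))] x hw N (by simp only [List.length_singleton]; exact hVne)
      refine le_trans this ?_
      rw [show rwt ε [(s, x, (0 : Bnd))] = 0 by rw [rwt_cons, rwt_nil, hrB0]; ring]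
      simp
  have hnetop : ∀ x, ∃ r : ℝ, BF E s ε N x = ((r : ℝ) : WithTop ℝ) ∧ r ≤ 0 := by
    intro x
    have h1 := hle0 x
    have h2 : BF E s ε N x ≠ ⊤ := by
      intro hc; rw [hc] at h1; exact absurd h1 (by simp)
    obtain ⟨r, hr⟩ := WithTop.ne_top_iff_exists.1 h2
    refine ⟨r, hr.symm, ?_⟩
    rw [← hr] at h1
    exact_mod_cast h1
  choose d hd hd0 using hnetop
  have hds : d s = 0 := by
    have h2 : BF E s ε N s ≠ ⊤ := by rw [hd s]; exact WithTop.coe_ne_top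
    obtain ⟨l, hl, hval⟩ := BF_attained E s ε N s h2
    have hpos : 0 ≤ rwt ε l :=
      rwt_closed_nonneg E hNN hε0 hεN l.length l s (le_refl _) hl
    have : ((d s : ℝ) : WithTop ℝ) = ((rwt ε l : ℝ) : WithTop ℝ) := by
      rw [← hd s, hval]
    have heq : d s = rwt ε l := by exact_mod_cast this
    have := hd0 s
    linarith
  refine ⟨d, hds, hd0, ?_⟩
  intro e he
  have htri := BF_triangle E s hNN hε0 hεN e he
  rw [hd e.2.1, hd e.1, ← WithTop.coe_add, WithTop.coe_le_coe] at htri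
  exact Bnd.satB_of_le_rB hε0 (by linarith)

/-- From some negative cycle, extract one with pairwise distinct sources. -/
lemma exists_min_negcycle (E : Finset (V × V × Bnd))
    (h : ∃ x : V, ∃ l, Wk E x x l ∧ bwt l < 0) :
    ∃ x : V, ∃ l, Wk E x x l ∧ bwt l < 0 ∧ (l.map (fun e => e.1)).Nodup := by
  obtain ⟨x, l, hw, hneg⟩ := h
  have : ∀ (n : ℕ) (x : V) (l : List (V × V × Bnd)), l.length ≤ n →
      Wk E x x l → bwt l < 0 →
      ∃ y : V, ∃ m, Wk E y y m ∧ bwt m < 0 ∧ (m.map (fun e => e.1)).Nodup := by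
    intro n
    induction n with
    | zero =>
      intro x l hlen hw hneg
      rw [List.length_eq_zero_iff.1 (Nat.le_zero.1 hlen)] at hneg
      exact absurd hneg (by simp [lt_irrefl])
    | succ n ih =>
      intro x l hlen hw hneg
      by_cases hnd : (l.map (fun e => e.1)).Nodup
      · exact ⟨x, l, hw, hneg, hnd⟩
      · obtain ⟨a, l₂, l', hw₂, hne₂, hw', hne', hlen', hb, _⟩ := wk_split hw hnd
        have hl₂ : l₂.length ≤ n := by
          have := List.length_pos_iff.2 hne'
          omega
        have hl' : l'.length ≤ n := by
          have := List.length_pos_iff.2 hne₂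
          omega
        rcases lt_or_ge (bwt l₂) 0 with hc | hc
        · exact ih a l₂ hl₂ hw₂ hc
        · have hc' : bwt l' < 0 := by
            by_contra hcc
            push_neg at hcc
            have := Bnd.add_nonneg hc hcc
            rw [hb] at this
            exact absurd hneg (not_lt.2 this)
          exact ih x l' hl' hw' hc'
  exact this l.length x l (le_refl _) hw hneg

end Construction
section Chain

lemma Bnd.add_comm' (a b : Bnd) : a + b = b + a := by
  refine Bnd.ext ?_ ?_
  · simp only [Bnd.fst_add]; ring
  · simp only [Bnd.snd_add, Bool.and_comm]

lemma satB_congr {d d' : ℝ} {b b' : Bnd} (hd : d = d') (hb : b = b')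
    (h : satB d b) : satB d' b' := hd ▸ hb ▸ h

variable {C : Type*}

/-- Telescoping satisfaction along a walk. -/
lemma wk_telescope {E : Finset (Option C × Option C × Bnd)} (v : C → ℝ) :
    ∀ (l : List (Option C × Option C × Bnd)) (x y : Option C), Wk E x y l →
      (∀ e ∈ l, satB (val0 v e.1 - val0 v e.2.1) e.2.2) →
      satB (val0 v x - val0 v y) (bwt l) := by
  intro l
  induction l with
  | nil =>
    rintro x y rfl _
    exact satB_congr (sub_self _).symm rfl Bnd.satB_zero
  | cons e t ih =>
    rintro x y ⟨heE, he21, hw⟩ hsat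
    have h1 := ih x e.1 hw (fun f hf => hsat f (List.mem_cons_of_mem _ hf))
    have h2 := hsat e (List.mem_cons_self)
    rw [he21] at h2
    have h3 := Bnd.satB_add h1 h2
    refine satB_congr ?_ ?_ h3
    · ring
    · rw [bwt_cons, Bnd.add_comm']

/-- A chain of segments: like a walk, but without graph membership. -/
def Ch : Option C → Option C → List (Option C × Option C × Bnd × Bool) → Prop
  | x, y, [] => x = y
  | x, y, s :: c => s.2.1 = y ∧ Ch x s.1 c

/-- A segment is valid if its constraint is implied by `A` (tag `true`)
or by `B` (tag `false`). -/
def SegOK (A B : Set (C → ℝ)) (s : Option C × Option C × Bnd × Bool) : Prop :=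
  (s.2.2.2 = true → ∀ v ∈ A, satB (val0 v s.1 - val0 v s.2.1) s.2.2.1) ∧
  (s.2.2.2 = false → ∀ v ∈ B, satB (val0 v s.1 - val0 v s.2.1) s.2.2.1)

def bsum (c : List (Option C × Option C × Bnd × Bool)) : Bnd :=
  (c.map (fun s => s.2.2.1)).sum

@[simp] lemma bsum_nil : bsum ([] : List (Option C × Option C × Bnd × Bool)) = 0 := rfl
lemma bsum_cons (s) (c : List (Option C × Option C × Bnd × Bool)) :
    bsum (s :: c) = s.2.2.1 + bsum c := by simp [bsum]

/-- Telescoping satisfaction along a chain. -/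
lemma ch_telescope (v : C → ℝ) :
    ∀ (c : List (Option C × Option C × Bnd × Bool)) (x y : Option C), Ch x y c →
      (∀ s ∈ c, satB (val0 v s.1 - val0 v s.2.1) s.2.2.1) →
      satB (val0 v x - val0 v y) (bsum c) := by
  intro c
  induction c with
  | nil =>
    rintro x y rfl _
    exact satB_congr (sub_self _).symm rfl Bnd.satB_zero
  | cons s t ih =>
    rintro x y ⟨hs, hc⟩ hsat
    have h1 := ih x s.1 hc (fun f hf => hsat f (List.mem_cons_of_mem _ hf))
    have h2 := hsat s (List.mem_cons_self)
    rw [hs] at h2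
    have h3 := Bnd.satB_add h1 h2
    refine satB_congr ?_ ?_ h3
    · ring
    · rw [bsum_cons, Bnd.add_comm']

/-- Counting: an alternating list starting with `false` has at most
`length / 2` elements satisfying `f`. -/
lemma alt_count {α : Type*} (f : α → Bool) :
    ∀ (n : ℕ) (l : List α), l.length ≤ n →
      List.Chain' (fun a b => f a ≠ f b) l → l.head?.map f = some false →
      2 * (l.filter f).length ≤ l.length := by
  intro n
  induction n with
  | zero =>
    intro l hlen _ hhead
    rw [List.length_eq_zero_iff.1 (Nat.le_zero.1 hlen)] at hhead
    simp at hhead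
  | succ n ih =>
    intro l hlen hch hhead
    rcases l with _ | ⟨a, rest⟩
    · simp at hhead
    · have ha : f a = false := by
        simp only [List.head?_cons, Option.map_some] at hhead
        exact Option.some_injective _ hhead
      rcases rest with _ | ⟨b, rest'⟩
      · simp [List.filter_cons, ha]
      · have hb : f b = true := by
          have := List.isChain_cons_cons.1 hch
          cases hfb : f b
          · exact absurd (ha.trans hfb.symm) this.1
          · rfl
        have hch' : List.Chain' (fun a b => f a ≠ f b) (b :: rest') :=
          (List.isChain_cons_cons.1 hch).2
        rcases rest' with _ | ⟨c, rest''⟩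
        · rw [List.filter_cons_of_neg (by simp [ha]), List.filter_cons_of_pos (by simp [hb])]
          simp
        · have hc : f c = false := by
            have := (List.isChain_cons_cons.1 hch').1
            cases hfc : f c
            · rfl
            · exact absurd (hb.trans hfc.symm) this
          have hch'' : List.Chain' (fun a b => f a ≠ f b) (c :: rest'') :=
            (List.isChain_cons_cons.1 hch').2
          have hlen'' : (c :: rest'').length ≤ n := by
            simp only [List.length_cons] at hlen ⊢
            omega
          have hrec := ih (c :: rest'') hlen'' hch'' (by simp [hc])
          rw [List.filter_cons_of_neg (by simp [ha]), List.filter_cons_of_pos (by simp [hb])]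
          simp only [List.length_cons] at hrec ⊢
          omega

/-- Build an alternating chain of implied segments from a walk. -/
lemma chain_build {E : Finset (Option C × Option C × Bnd)} (A B : Set (C → ℝ))
    (tag : Option C × Option C × Bnd → Bool)
    (hsat : ∀ e ∈ E,
      (tag e = true → ∀ v ∈ A, satB (val0 v e.1 - val0 v e.2.1) e.2.2) ∧
      (tag e = false → ∀ v ∈ B, satB (val0 v e.1 - val0 v e.2.1) e.2.2)) :
    ∀ (l : List (Option C × Option C × Bnd)) (x y : Option C), Wk E x y l → l ≠ [] →
      ∃ segs : List (Option C × Option C × Bnd × Bool),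
        Ch x y segs ∧ (∀ s ∈ segs, SegOK A B s) ∧
        List.Chain' (fun s t => s.2.2.2 ≠ t.2.2.2) segs ∧
        bsum segs = bwt l ∧
        segs.head?.map (fun s => s.2.2.2) = l.head?.map tag ∧
        segs.length ≤ l.length := by
  intro l
  induction l with
  | nil => intro x y _ hne; exact absurd rfl hne
  | cons e t ih =>
    rintro x y ⟨heE, he21, hw⟩ _
    have hseg_ok : ∀ (u w : Option C), u = e.1 → w = y →
        SegOK A B (u, w, e.2.2, tag e) := by
      rintro u w rfl rfl
      constructor
      · intro htag v hv
        have := ((hsat e heE).1 htag) v hv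
        rwa [he21] at this
      · intro htag v hv
        have := ((hsat e heE).2 htag) v hv
        rwa [he21] at this
    rcases t with _ | ⟨f, t'⟩
    · -- single edge
      have hx : x = e.1 := hw
      refine ⟨[(e.1, y, e.2.2, tag e)], ⟨rfl, hx⟩, ?_, ?_, ?_, ?_, ?_⟩
      · intro s hs
        rcases List.mem_singleton.1 hs with rfl
        exact hseg_ok _ _ rfl rfl
      · exact List.isChain_singleton ..
      · rw [bsum_cons, bsum_nil, bwt_cons, bwt_nil]
      · simp
      · simp
    · obtain ⟨segs, hch, hok, halt, hsum, hhead, hlen⟩ := ih x e.1 hw (by simp)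
      rcases segs with _ | ⟨s0, rest⟩
      · exact absurd hhead (by simp)
      · obtain ⟨hs0, hch'⟩ := hch
        by_cases htag : tag e = s0.2.2.2
        · -- merge
          refine ⟨(s0.1, y, s0.2.2.1 + e.2.2, s0.2.2.2) :: rest,
            ⟨rfl, hch'⟩, ?_, ?_, ?_, ?_, ?_⟩
          · intro s hs
            rcases List.mem_cons.1 hs with rfl | hs
            · have hs0ok := hok s0 (List.mem_cons_self)
              constructor
              · intro ht0 v hv
                have h1 := hs0ok.1 ht0 v hv
                have h2 := ((hsat e heE).1 (htag.trans ht0)) v hv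
                rw [he21] at h2
                rw [hs0] at h1
                refine satB_congr ?_ rfl (Bnd.satB_add h1 h2)
                ring
              · intro ht0 v hv
                have h1 := hs0ok.2 ht0 v hv
                have h2 := ((hsat e heE).2 (htag.trans ht0)) v hv
                rw [he21] at h2
                rw [hs0] at h1
                refine satB_congr ?_ rfl (Bnd.satB_add h1 h2)
                ring
            · exact hok s (List.mem_cons_of_mem _ hs)
          · rcases rest with _ | ⟨r, rest'⟩
            · exact List.isChain_singleton ..
            · exact List.isChain_cons_cons.2
                ⟨(List.isChain_cons_cons.1 halt).1, (List.isChain_cons_cons.1 halt).2⟩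
          · rw [bsum_cons, bwt_cons, ← hsum, bsum_cons]
            refine Bnd.ext ?_ ?_
            · simp only [Bnd.fst_add]; ring
            · simp only [Bnd.snd_add, Bool.and_assoc, Bool.and_comm, Bool.and_left_comm]
          · simp only [List.head?_cons, Option.map_some]
            rw [htag]
          · simp only [List.length_cons] at hlen ⊢
            omega
        · -- new segment
          refine ⟨(e.1, y, e.2.2, tag e) :: s0 :: rest,
            ⟨rfl, hs0, hch'⟩, ?_, ?_, ?_, ?_, ?_⟩
          · intro s hs
            rcases List.mem_cons.1 hs with rfl | hs
            · exact hseg_ok _ _ rfl rfl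
            · exact hok s hs
          · exact List.isChain_cons_cons.2 ⟨htag, halt⟩
          · rw [bsum_cons, bwt_cons, ← hsum]
          · simp
          · simp only [List.length_cons] at hlen ⊢
            omega

end Chain

/-- For every pair `(A, B)` of disjoint nonempty zones over the finite clock set
`C`, there is an interpolant for `(A, B)` defined by a finite set of at most
`⌊(|C| + 1) / 2⌋` atomic constraints. -/
theorem small_interpolant {C : Type*} [Fintype C] (A B : Set (C → ℝ))
    (hA : IsZone A) (hB : IsZone B) (hAne : A.Nonempty) (hBne : B.Nonempty)
    (hdisj : A ∩ B = ∅) :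
    ∃ G : Finset (Option C × Option C × Bnd),
      G.card ≤ (Fintype.card C + 1) / 2 ∧ A ⊆ zoneOf G ∧ zoneOf G ∩ B = ∅ := by
  classical
  obtain ⟨GA, rfl⟩ := hA
  obtain ⟨GB, rfl⟩ := hB
  set nonnegE : Finset (Option C × Option C × Bnd) :=
    Finset.univ.image (fun c : C => ((none : Option C), (some c : Option C), (0 : Bnd)))
    with hnne
  set GA' : Finset (Option C × Option C × Bnd) := GA ∪ nonnegE with hGA'
  set E : Finset (Option C × Option C × Bnd) := GA' ∪ GB with hEdef
  set tag : Option C × Option C × Bnd → Bool :=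
    fun e => if e ∈ GA' then true else false with htagdef
  have hsat0 : ∀ (v : C → ℝ), (∀ c, 0 ≤ v c) → ∀ (c : C),
      satB (val0 v none - val0 v (some c)) (0 : Bnd) := by
    intro v hv c
    unfold satB
    simp only [Bnd.snd_zero, if_true, Bnd.fst_zero]
    have : val0 v none = 0 := rfl
    have h2 : val0 v (some c) = v c := rfl
    rw [this, h2]
    push_cast
    linarith [hv c]
  have hsatA : ∀ e ∈ E, tag e = true →
      ∀ v ∈ zoneOf GA, satB (val0 v e.1 - val0 v e.2.1) e.2.2 := by
    intro e _ htg v hv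
    have heGA' : e ∈ GA' := by
      by_contra hc
      rw [htagdef] at htg
      simp only [if_neg hc] at htg
      exact absurd htg (by simp)
    rcases Finset.mem_union.1 heGA' with hga | hnn
    · exact hv.2 e hga
    · obtain ⟨c, _, rfl⟩ := Finset.mem_image.1 hnn
      exact hsat0 v hv.1 c
  have hsatB : ∀ e ∈ E, tag e = false →
      ∀ v ∈ zoneOf GB, satB (val0 v e.1 - val0 v e.2.1) e.2.2 := by
    intro e heE htg v hv
    have hnA : e ∉ GA' := by
      intro hc
      rw [htagdef] at htg
      simp only [if_pos hc] at htg
      exact absurd htg (by simp)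
    rcases Finset.mem_union.1 heE with h | h
    · exact absurd h hnA
    · exact hv.2 e h
  have hcov : ∀ x : Option C, x ≠ none → ((none : Option C), x, (0 : Bnd)) ∈ E := by
    intro x hx
    rcases x with _ | c
    · exact absurd rfl hx
    · refine Finset.mem_union.2 (Or.inl (Finset.mem_union.2 (Or.inr ?_)))
      exact Finset.mem_image.2 ⟨c, Finset.mem_univ c, rfl⟩
  have hneg : ∃ x : Option C, ∃ l, Wk E x x l ∧ bwt l < 0 := by
    by_contra hno
    push_neg at hno
    obtain ⟨d, hds, hd0, hdsat⟩ := exists_potential E none hcov (fun x l h => not_lt.2 (hno x l h))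
    set v : C → ℝ := fun c => - d (some c) with hvdef
    have hval : ∀ x : Option C, val0 v x = - d x := by
      intro x
      rcases x with _ | c
      · show (0 : ℝ) = - d none
        rw [hds]; ring
      · rfl
    have hmem : ∀ (GX : Finset (Option C × Option C × Bnd)), GX ⊆ E →
        v ∈ zoneOf GX := by
      intro GX hsub
      refine ⟨fun c => neg_nonneg.2 (hd0 (some c)), ?_⟩
      intro g hg
      have := hdsat g (hsub hg)
      rw [hval, hval]
      exact satB_congr (by ring) rfl this
    have hvA : v ∈ zoneOf GA :=
      hmem GA (fun g hg => Finset.mem_union.2 (Or.inl (Finset.mem_union.2 (Or.inl hg))))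
    have hvB : v ∈ zoneOf GB := hmem GB (fun g hg => Finset.mem_union.2 (Or.inr hg))
    exact absurd (Set.mem_inter hvA hvB) (by rw [hdisj]; simp)
  obtain ⟨x0, l, hw, hneg', hnd⟩ := exists_min_negcycle E hneg
  have hlV : l.length ≤ Fintype.card C + 1 := by
    have h1 := hnd.length_le_card
    simpa [Fintype.card_option] using h1
  by_cases hall : ∀ e ∈ l, tag e = true
  · exfalso
    obtain ⟨v0, hv0⟩ := hAne
    have hsat' : ∀ e ∈ l, satB (val0 v0 e.1 - val0 v0 e.2.1) e.2.2 := fun e he =>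
      hsatA e (wk_mem hw e he) (hall e he) v0 hv0
    have htel := wk_telescope v0 l x0 x0 hw hsat'
    rw [sub_self] at htel
    exact Bnd.not_satB_zero hneg' htel
  · push_neg at hall
    obtain ⟨e', he'l, he'tag⟩ := hall
    have he'tag' : tag e' = false := by
      revert he'tag; cases tag e' <;> simp
    obtain ⟨l1, q, rfl⟩ := List.append_of_mem he'l
    obtain ⟨z1, hWl1, hW2⟩ := (wk_append (m := l1) (l := e' :: q)).1 hw
    have hrot : Wk E z1 z1 ((e' :: q) ++ l1) := wk_append.2 ⟨x0, hW2, hWl1⟩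
    have hmb : bwt ((e' :: q) ++ l1) = bwt (l1 ++ e' :: q) := by
      rw [bwt_append, bwt_append]; exact Bnd.add_comm' _ _
    have hmneg : bwt ((e' :: q) ++ l1) < 0 := by rw [hmb]; exact hneg'
    have hmlen : ((e' :: q) ++ l1).length ≤ Fintype.card C + 1 := by
      simp only [List.length_append, List.length_cons] at hlV ⊢
      omega
    obtain ⟨segs, hch, hok, halt, hsum, hhead, hslen⟩ :=
      chain_build (zoneOf GA) (zoneOf GB) tag
        (fun e he => ⟨hsatA e he, hsatB e he⟩) ((e' :: q) ++ l1) z1 z1 hrot (by simp)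
    refine ⟨((segs.filter (fun s => s.2.2.2)).map (fun s => (s.1, s.2.1, s.2.2.1))).toFinset,
      ?_, ?_, ?_⟩
    · have hc1 : (((segs.filter (fun s => s.2.2.2)).map
          (fun s => (s.1, s.2.1, s.2.2.1))).toFinset).card
          ≤ (segs.filter (fun s => s.2.2.2)).length :=
        le_trans (List.toFinset_card_le _) (le_of_eq (List.length_map ..))
      have hheadf : segs.head?.map (fun s => s.2.2.2) = some false := by
        rw [hhead]
        simp [he'tag']
      have hc2 : 2 * (segs.filter (fun s => s.2.2.2)).length ≤ segs.length :=
        alt_count _ segs.length segs (le_refl _) halt hheadf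
      omega
    · intro v hv
      refine ⟨hv.1, ?_⟩
      intro g hg
      simp only [List.mem_toFinset, List.mem_map, List.mem_filter] at hg
      obtain ⟨s, ⟨hsm, hst⟩, rfl⟩ := hg
      exact (hok s hsm).1 hst v hv
    · rw [Set.eq_empty_iff_forall_notMem]
      rintro v ⟨hvG, hvB⟩
      have hsat' : ∀ s ∈ segs, satB (val0 v s.1 - val0 v s.2.1) s.2.2.1 := by
        intro s hsm
        rcases hts : s.2.2.2 with _ | _
        · exact (hok s hsm).2 hts v hvB
        · have hg : (s.1, s.2.1, s.2.2.1) ∈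
              ((segs.filter (fun s => s.2.2.2)).map
                (fun s => (s.1, s.2.1, s.2.2.1))).toFinset := by
            simp only [List.mem_toFinset, List.mem_map]
            exact ⟨s, List.mem_filter.2 ⟨hsm, by rw [hts]⟩, rfl⟩
          exact hvG.2 _ hg
      have htel := ch_telescope v segs z1 z1 hch hsat'
      rw [sub_self, hsum] at htel
      exact Bnd.not_satB_zero hmneg htel
end

section
/- Let 𝒟 be an abstract domain and z ∈ C. Define the relation S_Reset_z on minterms by: (u,w) ∈ S_Reset_z iff (1) for every (k,≺) ∈ 𝒟_{z,0} with (k,≺) ≥ (0,≤), w⟦z−0≺k⟧ = true; (2) for every x ∈ C0 with x ≠ z and every (k,≺) ∈ 𝒟_{x,z}, if u⟦x−0≺'l⟧ = true for some (l,≺') ∈ 𝒟_{x,0} with (l,≺') ≤ (k,≺), then w⟦x−z≺k⟧ = true; (3) for every y ∈ C0 with y ≠ z and every (k,≺) ∈ 𝒟_{z,y}, if u⟦0−y≺'l⟧ = true for some (l,≺') ∈ 𝒟_{0,y} with (l,≺') ≤ (k,≺), then w⟦z−y≺k⟧ = true; (4) for every y ∈ C0 with y ≠ z and every (k,≺) ∈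 𝒟_{z,y} with (k,≺) ≥ (0,≤), w⟦z−y≺k⟧ = true; and (5) for all x,y ∈ C0 with x ≠ z and y ≠ z and all (k,≺) ∈ 𝒟_{x,y}, w⟦x−y≺k⟧ = u⟦x−y≺k⟧. Then for every set A of minterms, α_𝒟(⟦A⟧[z←0]) ⊆ {w : there exists u ∈ A with (u,w) ∈ S_Reset_z}. -/
/-- The inverse of a bound: the inverse of `(k, ≺)` is `(−k, ≺⁻¹)`, where
`≤⁻¹ = <` and `<⁻¹ = ≤`. -/
def bndInv (b : Bnd) : Bnd := toLex (-(ofLex b).1, !(ofLex b).2)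

variable {C : Type*}

/-- An abstract domain assigns a finite set of bounds to each ordered pair of
clocks in `C0 = C ∪ {0}`. -/
abbrev AbsDom (C : Type*) := Option C → Option C → Finset Bnd

/-- The symmetry requirement on abstract domains:
`𝒟_{y,x} = {(−k, ≺⁻¹) : (k, ≺) ∈ 𝒟_{x,y}}`. -/
def DomSym (𝒟 : AbsDom C) : Prop := ∀ x y, 𝒟 y x = (𝒟 x y).image bndInv

variable [LinearOrder (Option C)]

/-- The predicate set `P^𝒟`: one variable `p_{x−y≺k}` for each pair `x ⊏ y`
(in the fixed total order on `C0`) and each bound `(k, ≺) ∈ 𝒟_{x,y}`. -/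
abbrev Pred (𝒟 : AbsDom C) :=
  {p : Option C × Option C × Bnd // p.1 < p.2.1 ∧ p.2.2 ∈ 𝒟 p.1 p.2.1}

/-- A minterm: a Boolean valuation of the predicate set. -/
abbrev Minterm (𝒟 : AbsDom C) := Pred 𝒟 → Bool

/-- The semantics of a minterm: the set of (nonnegative) clock valuations
satisfying exactly the constraints prescribed by the minterm. -/
def mtSem (𝒟 : AbsDom C) (u : Minterm 𝒟) : Set (C → ℝ) :=
  {v | (∀ c, 0 ≤ v c) ∧
    ∀ p : Pred 𝒟, (satB (val0 v p.1.1 - val0 v p.1.2.1) p.1.2.2 ↔ u p = true)}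

/-- The semantics of a set of minterms. -/
def setSem (𝒟 : AbsDom C) (S : Set (Minterm 𝒟)) : Set (C → ℝ) :=
  ⋃ u ∈ S, mtSem 𝒟 u

/-- The abstraction function `α_𝒟` maps a set `Z` of valuations to the set of
minterms whose semantics meets `Z`. -/
def absF (𝒟 : AbsDom C) (Z : Set (C → ℝ)) : Set (Minterm 𝒟) :=
  {u | (mtSem 𝒟 u ∩ Z).Nonempty}

/-- The literal value `u⟦x−y≺k⟧`: the value of the predicate `p_{x−y≺k}` if
`x ⊏ y`, and the negation of the value of `p_{y−x≺⁻¹−k}` if `y ⊏ x`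
(if `x = y` the literal is the truth value of the constraint `0 ≺ k`). -/
def litVal (𝒟 : AbsDom C) (u : Minterm 𝒟) (x y : Option C) (b : Bnd) : Bool :=
  if h : x < y ∧ b ∈ 𝒟 x y then u ⟨(x, y, b), h⟩
  else if h : y < x ∧ bndInv b ∈ 𝒟 y x then !(u ⟨(y, x, bndInv b), h⟩)
  else decide ((0 : Bnd) ≤ b)

/-- A minterm is 2-reduced if no contradiction can be obtained from it via
paths of length at most 2: any constraint implied by a single stronger
asserted constraint, or by the sum of two asserted constraints, is asserted. -/
def TwoReduced (𝒟 : AbsDom C) (u : Minterm 𝒟) : Prop :=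
  ∀ x y : Option C, ∀ b ∈ 𝒟 x y,
    ((∃ b' ∈ 𝒟 x y, b' ≤ b ∧ litVal 𝒟 u x y b' = true) ∨
      (∃ z : Option C, ∃ b₁ ∈ 𝒟 x z, ∃ b₂ ∈ 𝒟 z y,
        b₁ + b₂ ≤ b ∧ litVal 𝒟 u x z b₁ = true ∧ litVal 𝒟 u z y b₂ = true)) →
    litVal 𝒟 u x y b = true

/-- The image of a set of valuations under resetting clock `z` to `0`. -/
def resetSet {C : Type*} [DecidableEq C] (z : C) (S : Set (C → ℝ)) :
    Set (C → ℝ) :=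
  {w | ∃ v ∈ S, w = Function.update v z 0}

/-- The abstract reset relation `S_Reset_z` on minterms. -/
def SReset {C : Type*} [LinearOrder (Option C)] (𝒟 : AbsDom C) (z : C)
    (u w : Minterm 𝒟) : Prop :=
  (∀ b ∈ 𝒟 (some z) none, (0 : Bnd) ≤ b →
      litVal 𝒟 w (some z) none b = true) ∧
  (∀ x : Option C, x ≠ some z → ∀ b ∈ 𝒟 x (some z),
      (∃ b' ∈ 𝒟 x none, b' ≤ b ∧ litVal 𝒟 u x none b' = true) →
      litVal 𝒟 w x (some z) b = true) ∧
  (∀ y : Option C, y ≠ some z → ∀ b ∈ 𝒟 (some z) y,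
      (∃ b' ∈ 𝒟 none y, b' ≤ b ∧ litVal 𝒟 u none y b' = true) →
      litVal 𝒟 w (some z) y b = true) ∧
  (∀ y : Option C, y ≠ some z → ∀ b ∈ 𝒟 (some z) y, (0 : Bnd) ≤ b →
      litVal 𝒟 w (some z) y b = true) ∧
  (∀ x y : Option C, x ≠ some z → y ≠ some z → ∀ b ∈ 𝒟 x y,
      litVal 𝒟 w x y b = litVal 𝒟 u x y b)

lemma satB_mono_bnd {d : ℝ} {b b' : Bnd} (h : b' ≤ b) (hd : satB d b') :
    satB d b := by
  have h' := Prod.Lex.le_iff.mp h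
  unfold satB at *
  rcases h' with h1 | ⟨h1, h2⟩
  · have : ((ofLex b').1 : ℝ) < (ofLex b).1 := by exact_mod_cast h1
    split at hd <;> split <;> linarith
  · have h1' : ((ofLex b').1 : ℝ) = (ofLex b).1 := by exact_mod_cast h1
    split at hd <;> split <;>
      simp_all [Bool.le_iff_imp] <;> linarith

lemma satB_mono_d {d d' : ℝ} {b : Bnd} (h : d ≤ d') (hd : satB d' b) :
    satB d b := by
  unfold satB at *; split at hd <;> split <;> simp_all <;> linarith

lemma satB_zero_iff (b : Bnd) : satB 0 b ↔ (0 : Bnd) ≤ b := by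
  have hle : ((0 : Bnd) ≤ b) ↔ (0 : ℤ) < (ofLex b).1 ∨
      (0 : ℤ) = (ofLex b).1 ∧ (true ≤ (ofLex b).2) :=
    Prod.Lex.le_iff
  unfold satB
  rw [hle]
  cases hs : (ofLex b).2 <;> simp only [hs, Bool.le_iff_imp, if_true, if_false]
  · rw [if_neg (by simp)]
    have hc : (0:ℝ) < (((ofLex b).1 : ℤ):ℝ) ↔ (0:ℤ) < (ofLex b).1 := by
      exact_mod_cast Iff.rfl
    rw [hc]
    constructor
    · exact fun h => Or.inl h
    · rintro (h | ⟨h, h2⟩)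
      · exact h
      · exact absurd (h2 trivial) (by simp)
  · have hc : (0:ℝ) ≤ (((ofLex b).1 : ℤ):ℝ) ↔ (0:ℤ) ≤ (ofLex b).1 := by
      exact_mod_cast Iff.rfl
    rw [hc]
    constructor
    · intro h
      rcases lt_or_eq_of_le h with h'|h'
      · exact Or.inl h'
      · exact Or.inr ⟨h', fun _ => trivial⟩
    · rintro (h | ⟨h, _⟩) <;> omega

lemma satB_neg (d : ℝ) (b : Bnd) : satB d b ↔ ¬ satB (-d) (bndInv b) := by
  unfold satB bndInv
  simp only [ofLex_toLex]
  cases hs : (ofLex b).2 <;> simp [hs] <;> constructor <;> intro h <;> linarith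

lemma litVal_iff {C : Type*} [LinearOrder (Option C)] {𝒟 : AbsDom C}
    (hsym : DomSym 𝒟) {m : Minterm 𝒟} {v : C → ℝ} (hv : v ∈ mtSem 𝒟 m)
    {x y : Option C} {b : Bnd} (hb : b ∈ 𝒟 x y) :
    (litVal 𝒟 m x y b = true ↔ satB (val0 v x - val0 v y) b) := by
  obtain ⟨hpos, hsat⟩ := hv
  rcases lt_trichotomy x y with hxy | hxy | hxy
  · rw [litVal, dif_pos ⟨hxy, hb⟩]
    exact (hsat ⟨(x, y, b), hxy, hb⟩).symm
  · subst hxy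
    rw [litVal, dif_neg (by simp), dif_neg (by simp), sub_self]
    simp [satB_zero_iff b]
  · have hinv : bndInv b ∈ 𝒟 y x := by
      rw [hsym x y]; exact Finset.mem_image_of_mem _ hb
    rw [litVal, dif_neg (fun h => absurd h.1 (not_lt.mpr hxy.le)),
      dif_pos ⟨hxy, hinv⟩]
    have h1 := hsat ⟨(y, x, bndInv b), hxy, hinv⟩
    have h2 := satB_neg (val0 v x - val0 v y) b
    rw [neg_sub] at h2
    simp only [Bool.not_eq_true']
    rw [h2]
    constructor
    · intro h hc
      exact absurd (h1.mp hc) (by simp [h])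
    · intro h
      by_contra hc
      exact h (h1.mpr (by simpa using hc))

/-- The abstraction of `⟦A⟧[z ← 0]` is contained in the image of `A` under the
relation `S_Reset_z`. -/
theorem reset_abstraction_sound {C : Type*} [LinearOrder (Option C)]
    [DecidableEq C] (𝒟 : AbsDom C) (hsym : DomSym 𝒟) (z : C)
    (A : Set (Minterm 𝒟)) :
    absF 𝒟 (resetSet z (setSem 𝒟 A)) ⊆ {w | ∃ u ∈ A, SReset 𝒟 z u w} := by
  intro w hw
  obtain ⟨v2, hv2w, v, hvS, hveq⟩ := hw
  obtain ⟨u, huA, hvu⟩ := Set.mem_iUnion₂.mp hvS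
  subst hveq
  set v2 := Function.update v z 0 with hv2
  have hz0 : val0 v2 (some z) = 0 := by simp [val0, hv2]
  have hn0 : val0 v2 none = 0 := rfl
  have hne : ∀ x : Option C, x ≠ some z → val0 v2 x = val0 v x := by
    intro x hx
    cases x with
    | none => rfl
    | some c =>
      have : c ≠ z := fun h => hx (by rw [h])
      simp [val0, hv2, Function.update_of_ne this]
  have hposv2 : ∀ y : Option C, 0 ≤ val0 v2 y := by
    intro y; cases y with
    | none => exact le_refl 0
    | some c => exact hv2w.1 c
  have L2 : ∀ {x y : Option C} {b : Bnd}, b ∈ 𝒟 x y →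
      (litVal 𝒟 w x y b = true ↔ satB (val0 v2 x - val0 v2 y) b) :=
    fun hb => litVal_iff hsym hv2w hb
  have L1 : ∀ {x y : Option C} {b : Bnd}, b ∈ 𝒟 x y →
      (litVal 𝒟 u x y b = true ↔ satB (val0 v x - val0 v y) b) :=
    fun hb => litVal_iff hsym hvu hb
  refine ⟨u, huA, ?_, ?_, ?_, ?_, ?_⟩
  · intro b hb h0b
    rw [L2 hb, hz0, hn0, sub_self]
    exact (satB_zero_iff b).mpr h0b
  · rintro x hx b hb ⟨b', hb', hle, hu'⟩
    rw [L1 hb'] at hu'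
    rw [L2 hb, hz0, hne x hx, sub_zero]
    rw [show val0 v x - val0 v none = val0 v x from sub_zero _] at hu'
    exact satB_mono_bnd hle hu'
  · rintro y hy b hb ⟨b', hb', hle, hu'⟩
    rw [L1 hb'] at hu'
    rw [L2 hb, hz0, hne y hy, zero_sub]
    rw [show val0 v none - val0 v y = -(val0 v y) from zero_sub _] at hu'
    exact satB_mono_bnd hle hu'
  · intro y hy b hb h0b
    rw [L2 hb, hz0, zero_sub]
    exact satB_mono_d (by linarith [hposv2 y]) ((satB_zero_iff b).mpr h0b)
  · intro x y hx hy b hb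
    have h2 := L2 hb
    rw [hne x hx, hne y hy] at h2
    have := h2.trans (L1 hb).symm
    cases hA : litVal 𝒟 w x y b <;> cases hB : litVal 𝒟 u x y b <;>
      simp_all
end
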